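/- Let m ≥ 1 be an integer, let β₁,…,β_m be non-constant complex polynomials such that deg(β_i − β_j) ≥ 1 for all 1 ≤ i ≠ j ≤ m, and let q₀, q₁, …, q_m be rational functions. If Σ_{j=1}^{m} q_j(z)·exp(β_j(z)) = q₀(z) holds for all z ∈ ℂ outside the finitely many poles of the q_j, then q₀ ≡ q₁ ≡ ⋯ ≡ q_m ≡ 0. -/

import Mathlib

open Complex Polynomial Finset

/-- `q : ℂ → ℂ` is a rational function: it agrees with a quotient of two complex
polynomials (with non-zero denominator) away from the zeros of the denominator. -/
def IsRat (q : ℂ → ℂ) : Prop :=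
  ∃ A B : Polynomial ℂ, B ≠ 0 ∧ ∀ z : ℂ, B.eval z ≠ 0 → q z = A.eval z / B.eval z

/-- `q : ℂ → ℂ` is a non-vanishing (i.e. not identically zero) rational function. -/
def IsNZRat (q : ℂ → ℂ) : Prop :=
  ∃ A B : Polynomial ℂ, A ≠ 0 ∧ B ≠ 0 ∧ ∀ z : ℂ, B.eval z ≠ 0 → q z = A.eval z / B.eval z

/-- Two functions agree for every `z` outside some finite (exceptional/pole) set. -/
def EqOffFinite (g h : ℂ → ℂ) : Prop :=
  ∃ S : Set ℂ, S.Finite ∧ ∀ z ∉ S, g z = h z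

/-- `f` is meromorphic on `ℂ` with finitely many poles: it is analytic away from a finite
set `S`, and at each point of `S` it is meromorphic (a pole or removable singularity). -/
def MeroFinPoles (f : ℂ → ℂ) : Prop :=
  ∃ S : Finset ℂ,
    (∀ z ∉ S, AnalyticAt ℂ f z) ∧
    ∀ z ∈ S, ∃ n : ℕ, AnalyticAt ℂ (fun w => (w - z) ^ n * f w) z

/-- `P : ℂ → ℂ` is (the value at `f` of) a differential polynomial in `f` of degree at most
`d` with rational coefficients:
`P(z) = ∑ _{λ ∈ Λ} a_λ(z) ∏ _{i=0}^{m} (f^{(i)}(z))^{λ_i}` with `∑ λ_i ≤ d`,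
the identity holding off a finite set (the poles of the coefficients). -/
def IsDiffPolyAt (d : ℕ) (f P : ℂ → ℂ) : Prop :=
  ∃ (m : ℕ) (L : Finset (Fin (m + 1) → ℕ)) (a : (Fin (m + 1) → ℕ) → ℂ → ℂ),
    (∀ lam ∈ L, IsRat (a lam)) ∧
    (∀ lam ∈ L, (∑ i, lam i) ≤ d) ∧
    ∃ S : Set ℂ, S.Finite ∧ ∀ z ∉ S,
      P z = ∑ lam ∈ L, a lam z * ∏ i : Fin (m + 1), (iteratedDeriv i.val f z) ^ lam i

/-- `Q` is a differential-polynomial operator of degree at most `d` with rational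
coefficients, acting on an arbitrary function `f`. -/
def IsDiffPolyOp (d : ℕ) (Q : (ℂ → ℂ) → ℂ → ℂ) : Prop :=
  ∃ (m : ℕ) (L : Finset (Fin (m + 1) → ℕ)) (a : (Fin (m + 1) → ℕ) → ℂ → ℂ),
    (∀ lam ∈ L, IsRat (a lam)) ∧
    (∀ lam ∈ L, (∑ i, lam i) ≤ d) ∧
    ∃ S : Set ℂ, S.Finite ∧ ∀ (f : ℂ → ℂ), ∀ z ∉ S,
      Q f z = ∑ lam ∈ L, a lam z * ∏ i : Fin (m + 1), (iteratedDeriv i.val f z) ^ lam i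

/-- Borel-type lemma, Lemma 3.3, for rational coefficients and
polynomial exponents. -/

lemma poly_zero_of_eq_zero_off_finite (p : Polynomial ℂ) (S : Set ℂ) (hS : S.Finite)
    (h : ∀ z ∉ S, p.eval z = 0) : p = 0 := by
  apply p.eq_zero_of_infinite_isRoot
  exact (hS.infinite_compl).mono (fun z hz => h z hz)

lemma step_ne_zero (γ Q : Polynomial ℂ) (hγ : 1 ≤ γ.natDegree) (hQ : Q ≠ 0) :
    derivative Q + Q * derivative γ ≠ 0 := by
  have hγ' : derivative γ ≠ 0 := by
    intro h
    have := Polynomial.natDegree_eq_zero_of_derivative_eq_zero h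
    omega
  have hmul : Q * derivative γ ≠ 0 := mul_ne_zero hQ hγ'
  by_cases hdQ : derivative Q = 0
  · simpa [hdQ] using hmul
  · have h1 : (derivative Q).natDegree < Q.natDegree := by
      apply Polynomial.natDegree_derivative_lt
      intro h0
      exact hdQ (by
        obtain ⟨c, rfl⟩ := Polynomial.natDegree_eq_zero.mp h0
        simp)
    have h2 : Q.natDegree ≤ (Q * derivative γ).natDegree := by
      rw [Polynomial.natDegree_mul hQ hγ']; omega
    intro h
    have he : derivative Q = -(Q * derivative γ) := by linear_combination h
    have : (derivative Q).natDegree = (Q * derivative γ).natDegree := by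
      rw [he, Polynomial.natDegree_neg]
    omega

lemma deriv_step (n : ℕ) (γ P : Fin n → Polynomial ℂ) (S : Set ℂ) (hS : S.Finite)
    (h : ∀ z ∉ S, ∑ j, (P j).eval z * Complex.exp ((γ j).eval z) = 0) :
    ∀ z ∉ S, ∑ j, (derivative (P j) + P j * derivative (γ j)).eval z *
      Complex.exp ((γ j).eval z) = 0 := by
  intro z hz
  have hopen : IsOpen Sᶜ := hS.isClosed.isOpen_compl
  set F : ℂ → ℂ := fun w => ∑ j, (P j).eval w * Complex.exp ((γ j).eval w) with hF
  have hder : HasDerivAt F (∑ j, (derivative (P j) + P j * derivative (γ j)).eval z *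
      Complex.exp ((γ j).eval z)) z := by
    apply HasDerivAt.fun_sum
    intro j _
    have := ((P j).hasDerivAt z).fun_mul (((γ j).hasDerivAt z).cexp)
    exact this.congr_deriv (by simp [Polynomial.eval_add, Polynomial.eval_mul]; ring)
  have hev : F =ᶠ[nhds z] (fun _ => (0 : ℂ)) := by
    filter_upwards [hopen.mem_nhds hz] with w hw
    exact h w hw
  exact hder.unique ((hasDerivAt_const z (0:ℂ)).congr_of_eventuallyEq hev)

lemma key : ∀ (n : ℕ) (β P : Fin n → Polynomial ℂ),
    (∀ i j, i ≠ j → 1 ≤ (β i - β j).natDegree) →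
    ∀ (S : Set ℂ), S.Finite →
    (∀ z ∉ S, ∑ j, (P j).eval z * Complex.exp ((β j).eval z) = 0) →
    ∀ j, P j = 0 := by
  intro n
  induction n with
  | zero => exact fun β P _ S _ _ j => j.elim0
  | succ n ih =>
    intro β P hβ S hS heq
    set l := Fin.last n with hl
    set γ : Fin (n+1) → Polynomial ℂ := fun j => β j - β l with hγ
    have heqγ : ∀ z ∉ S, ∑ j, (P j).eval z * Complex.exp ((γ j).eval z) = 0 := by
      intro z hz
      have h0 := heq z hz
      have : ∑ j, (P j).eval z * Complex.exp ((γ j).eval z)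
          = (∑ j, (P j).eval z * Complex.exp ((β j).eval z)) * Complex.exp (-(β l).eval z) := by
        rw [Finset.sum_mul]
        apply Finset.sum_congr rfl
        intro j _
        simp [hγ, Polynomial.eval_sub, Complex.exp_sub, Complex.exp_neg, div_eq_mul_inv, mul_assoc]
      rw [this, h0, zero_mul]
    -- iterated differentiation
    set step : (Fin (n+1) → Polynomial ℂ) → (Fin (n+1) → Polynomial ℂ) :=
      fun R j => derivative (R j) + R j * derivative (γ j) with hstep
    set Q : ℕ → Fin (n+1) → Polynomial ℂ := fun k => step^[k] P with hQdef
    have hQsucc : ∀ k, Q (k+1) = step (Q k) := by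
      intro k; simp [hQdef, Function.iterate_succ_apply']
    have hQeq : ∀ k, ∀ z ∉ S, ∑ j, (Q k j).eval z * Complex.exp ((γ j).eval z) = 0 := by
      intro k
      induction k with
      | zero => simpa [hQdef] using heqγ
      | succ k ihk =>
        have := deriv_step (n+1) γ (Q k) S hS ihk
        intro z hz
        rw [hQsucc k]
        exact this z hz
    have hQl : ∀ k, Q k l = derivative^[k] (P l) := by
      intro k
      induction k with
      | zero => simp [hQdef]
      | succ k ihk =>
        rw [hQsucc k, Function.iterate_succ_apply']
        simp [hstep, ihk, hγ]
    set N := (P l).natDegree + 1 with hN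
    have hQNl : Q N l = 0 := by
      rw [hQl]
      exact Polynomial.iterate_derivative_eq_zero (by omega)
    -- apply IH to castSucc part
    have hzeroQ : ∀ j : Fin n, Q N j.castSucc = 0 := by
      apply ih (fun j => γ j.castSucc) (fun j => Q N j.castSucc) _ S hS
      · intro z hz
        have := hQeq N z hz
        rw [Fin.sum_univ_castSucc] at this
        simpa [hQNl, ← hl] using this
      · intro i j hij
        have : γ i.castSucc - γ j.castSucc = β i.castSucc - β j.castSucc := by
          simp only [hγ]; ring
        rw [this]
        exact hβ _ _ (fun h => hij (Fin.castSucc_injective n h))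
    have hPzero : ∀ j : Fin n, P j.castSucc = 0 := by
      intro j
      have hγj : 1 ≤ (γ j.castSucc).natDegree := hβ _ _ (Fin.castSucc_lt_last j).ne
      have back : ∀ k, Q k j.castSucc = 0 → P j.castSucc = 0 := by
        intro k
        induction k with
        | zero => intro h; simpa [hQdef] using h
        | succ k ihk =>
          intro h
          rw [hQsucc k] at h
          apply ihk
          by_contra hne
          exact step_ne_zero (γ j.castSucc) (Q k j.castSucc) hγj hne h
      exact back N (hzeroQ j)
    -- now handle last
    have hPl : P l = 0 := by
      apply poly_zero_of_eq_zero_off_finite _ S hS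
      intro z hz
      have := heq z hz
      rw [Fin.sum_univ_castSucc] at this
      have hzsum : ∀ j : Fin n, (P j.castSucc).eval z * Complex.exp ((β j.castSucc).eval z) = 0 := by
        intro j; simp [hPzero j]
      rw [Finset.sum_congr rfl (fun j _ => hzsum j)] at this
      simpa [Complex.exp_ne_zero] using this
    intro j
    rcases Fin.eq_castSucc_or_eq_last j with ⟨i, rfl⟩ | rfl
    · exact hPzero i
    · exact hPl

theorem stmt_7 (m : ℕ) (hm : 1 ≤ m)
    (β : Fin m → Polynomial ℂ) (hβ : ∀ j, 0 < (β j).natDegree)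
    (hβij : ∀ i j, i ≠ j → 1 ≤ ((β i) - (β j)).natDegree)
    (q₀ : ℂ → ℂ) (q : Fin m → ℂ → ℂ)
    (hq₀ : IsRat q₀) (hq : ∀ j, IsRat (q j))
    (heq : EqOffFinite (fun z => ∑ j, q j z * Complex.exp ((β j).eval z)) q₀) :
    EqOffFinite q₀ (fun _ => 0) ∧ ∀ j, EqOffFinite (q j) (fun _ => 0) := by
  obtain ⟨A₀, B₀, hB₀, hv₀⟩ := hq₀
  choose A Bd hBd hv using hq
  obtain ⟨S, hSfin, hSeq⟩ := heq
  set Dall : Polynomial ℂ := B₀ * ∏ j, Bd j with hDall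
  have hDne : Dall ≠ 0 := mul_ne_zero hB₀ (Finset.prod_ne_zero_iff.2 fun j _ => hBd j)
  set T : Set ℂ := S ∪ {z | Dall.eval z = 0} with hT
  have hTfin : T.Finite := hSfin.union (Polynomial.finite_setOf_isRoot hDne)
  set Bfam : Fin (m+1) → Polynomial ℂ := Fin.cons 0 β with hBfam
  set Pfam : Fin (m+1) → Polynomial ℂ :=
    Fin.cons (-A₀ * ∏ j, Bd j) (fun j => A j * (B₀ * ∏ k ∈ univ.erase j, Bd k)) with hPfam
  have hcond : ∀ i j, i ≠ j → 1 ≤ (Bfam i - Bfam j).natDegree := by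
    intro i j hij
    induction i using Fin.cases with
    | zero =>
      induction j using Fin.cases with
      | zero => exact absurd rfl hij
      | succ j =>
        simp only [hBfam, Fin.cons_zero, Fin.cons_succ, zero_sub, Polynomial.natDegree_neg]
        exact hβ j
    | succ i =>
      induction j using Fin.cases with
      | zero =>
        simp only [hBfam, Fin.cons_zero, Fin.cons_succ, sub_zero]
        exact hβ i
      | succ j =>
        simp only [hBfam, Fin.cons_succ]
        exact hβij i j (fun h => hij (by rw [h]))
  have heq0 : ∀ z ∉ T, ∑ i, (Pfam i).eval z * Complex.exp ((Bfam i).eval z) = 0 := by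
    intro z hz
    have hzS : z ∉ S := fun h => hz (Or.inl h)
    have hzD : Dall.eval z ≠ 0 := fun h => hz (Or.inr h)
    have hBdz : ∀ j, (Bd j).eval z ≠ 0 := by
      intro j h
      apply hzD
      rw [hDall, Polynomial.eval_mul, Polynomial.eval_prod]
      rw [← Finset.mul_prod_erase univ _ (Finset.mem_univ j), h]
      ring
    have hB0z : B₀.eval z ≠ 0 := by
      intro h
      apply hzD
      rw [hDall, Polynomial.eval_mul, h, zero_mul]
    have hsum : ∑ j, q j z * Complex.exp ((β j).eval z) = q₀ z := hSeq z hzS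
    have hterm : ∀ j : Fin m, (Pfam j.succ).eval z = Dall.eval z * q j z := by
      intro j
      rw [hv j z (hBdz j)]
      have hsplit : (∏ k, (Bd k).eval z) = (Bd j).eval z * ∏ k ∈ univ.erase j, (Bd k).eval z :=
        (Finset.mul_prod_erase univ _ (Finset.mem_univ j)).symm
      simp only [hPfam, Fin.cons_succ, Polynomial.eval_mul, Polynomial.eval_prod, hDall]
      rw [hsplit]
      field_simp [hBdz j]
    have hterm0 : (Pfam 0).eval z = -(Dall.eval z * q₀ z) := by
      rw [hv₀ z hB0z]
      simp only [hPfam, Fin.cons_zero, Polynomial.eval_mul, Polynomial.eval_prod,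
        Polynomial.eval_neg, hDall]
      field_simp [hB0z]
    rw [Fin.sum_univ_succ]
    have hrest : ∀ j : Fin m, (Pfam j.succ).eval z * Complex.exp ((Bfam j.succ).eval z)
        = Dall.eval z * (q j z * Complex.exp ((β j).eval z)) := by
      intro j
      rw [hterm j]
      simp only [hBfam, Fin.cons_succ]
      ring
    rw [Finset.sum_congr rfl (fun j _ => hrest j), ← Finset.mul_sum, hsum, hterm0]
    simp [hBfam]
  have hall := key (m+1) Bfam Pfam hcond T hTfin heq0
  have hprodne : (∏ j, Bd j) ≠ 0 := Finset.prod_ne_zero_iff.2 fun j _ => hBd j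
  have hA₀ : A₀ = 0 := by
    have h0 := hall 0
    simp only [hPfam, Fin.cons_zero, neg_mul, neg_eq_zero, mul_eq_zero] at h0
    tauto
  have hAj : ∀ j, A j = 0 := by
    intro j
    have h0 := hall j.succ
    have hne : (B₀ * ∏ k ∈ univ.erase j, Bd k) ≠ 0 :=
      mul_ne_zero hB₀ (Finset.prod_ne_zero_iff.2 fun k _ => hBd k)
    simp only [hPfam, Fin.cons_succ] at h0
    rcases mul_eq_zero.mp h0 with h | h
    · exact h
    · exact absurd h hne
  constructor
  · exact ⟨{z | B₀.eval z = 0}, Polynomial.finite_setOf_isRoot hB₀, fun z hz => by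
      rw [hv₀ z hz, hA₀]; simp⟩
  · intro j
    exact ⟨{z | (Bd j).eval z = 0}, Polynomial.finite_setOf_isRoot (hBd j), fun z hz => by
      rw [hv j z hz, hAj j]; simp⟩
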